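/- Suppose I is an open interval of real numbers, V is a subgroup of Homeo⁺(I) acting freely on I, S is a nonempty set, and F : I → S is invariant with respect to some non-identity member of V. Then for any φ ∈ V: if F is past φ-invariant (there is some t ∈ I such that F(φ(x)) = F(x) for all x ∈ I with x < t), then F is fully φ-invariant (F ∘ φ = F on I). -/

import Mathlib

private lemma stmt10_cont {I : Set ℝ} (hIconn : I.OrdConnected) {d : Equiv.Perm I}
    (hd : StrictMono (⇑d)) : Continuous (⇑d : I → I) := by
  haveI := hIconn
  haveI : OrderTopology I := orderTopology_of_ordConnected (t := I)
  have h := (StrictMono.orderIsoOfSurjective _ hd d.surjective).continuous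
  rwa [StrictMono.coe_orderIsoOfSurjective] at h

private lemma stmt10_sign {I : Set ℝ} (hIconn : I.OrdConnected) {V : Subgroup (Equiv.Perm I)}
    (hmono : ∀ ψ ∈ V, StrictMono (⇑ψ)) (hfree : ∀ ψ ∈ V, ψ ≠ 1 → ∀ x : I, ψ x ≠ x)
    {d : Equiv.Perm I} (hd : d ∈ V) :
    (∀ x : I, d x < x) ∨ d = 1 ∨ (∀ x : I, x < d x) := by
  by_cases h1 : d = 1
  · exact Or.inr (Or.inl h1)
  haveI := hIconn
  haveI : OrderTopology I := orderTopology_of_ordConnected (t := I)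
  haveI : PreconnectedSpace I := Subtype.preconnectedSpace hIconn.isPreconnected
  have hc : Continuous (⇑d : I → I) := stmt10_cont hIconn (hmono d hd)
  have hAopen : IsOpen {x : I | d x < x} := isOpen_lt hc continuous_id
  have hBopen : IsOpen {x : I | x < d x} := isOpen_lt continuous_id hc
  have hcompl : {x : I | d x < x}ᶜ = {x : I | x < d x} := by
    ext x
    simp only [Set.mem_compl_iff, Set.mem_setOf_eq, not_lt]
    exact ⟨fun h => lt_of_le_of_ne h (Ne.symm (hfree d hd h1 x)), le_of_lt⟩
  have hclopen : IsClopen {x : I | d x < x} := ⟨by rw [← isOpen_compl_iff, hcompl]; exact hBopen, hAopen⟩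
  rcases isClopen_iff.mp hclopen with h | h
  · refine Or.inr (Or.inr fun x => ?_)
    have : x ∉ {x : I | d x < x} := by rw [h]; exact Set.notMem_empty x
    have hx : x ∈ {x : I | d x < x}ᶜ := this
    rw [hcompl] at hx
    exact hx
  · exact Or.inl fun x => by
      have : x ∈ {x : I | d x < x} := by rw [h]; trivial
      exact this

private lemma stmt10_escape {I : Set ℝ} (hIconn : I.OrdConnected) {V : Subgroup (Equiv.Perm I)}
    (hmono : ∀ ψ ∈ V, StrictMono (⇑ψ)) (hfree : ∀ ψ ∈ V, ψ ≠ 1 → ∀ x : I, ψ x ≠ x)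
    {d : Equiv.Perm I} (hd : d ∈ V) (hlt : ∀ x : I, x < d x) (x₀ M : I) :
    ∃ n : ℕ, M < (d ^ n) x₀ := by
  by_contra hcon
  push_neg at hcon
  have hstep : ∀ n : ℕ, (d ^ n) x₀ < (d ^ (n + 1)) x₀ := by
    intro n
    have h := hlt ((d ^ n) x₀)
    rwa [← Equiv.Perm.mul_apply, ← pow_succ'] at h
  have hmonoseq : StrictMono fun n : ℕ => ((d ^ n) x₀ : ℝ) :=
    strictMono_nat_of_lt_succ fun n => by exact_mod_cast hstep n
  have hbdd : BddAbove (Set.range fun n : ℕ => ((d ^ n) x₀ : ℝ)) := by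
    refine ⟨(M : ℝ), ?_⟩
    rintro y ⟨n, rfl⟩
    exact_mod_cast hcon n
  set L : ℝ := ⨆ n : ℕ, ((d ^ n) x₀ : ℝ) with hL
  have hge : (x₀ : ℝ) ≤ L := by
    have := le_ciSup hbdd 0
    simpa using this
  have hleM : L ≤ (M : ℝ) := ciSup_le fun n => by exact_mod_cast hcon n
  have hLI : L ∈ I := hIconn.out x₀.2 M.2 ⟨hge, hleM⟩
  have htend : Filter.Tendsto (fun n : ℕ => (d ^ n) x₀) Filter.atTop (nhds ⟨L, hLI⟩) := by
    rw [tendsto_subtype_rng]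
    exact tendsto_atTop_ciSup hmonoseq.monotone hbdd
  have hc : Continuous (⇑d : I → I) := stmt10_cont hIconn (hmono d hd)
  have htend2 : Filter.Tendsto (fun n : ℕ => d ((d ^ n) x₀)) Filter.atTop (nhds (d ⟨L, hLI⟩)) :=
    (hc.tendsto _).comp htend
  have htend3 : Filter.Tendsto (fun n : ℕ => d ((d ^ n) x₀)) Filter.atTop (nhds ⟨L, hLI⟩) := by
    have h4 : (fun n : ℕ => d ((d ^ n) x₀)) = fun n : ℕ => (d ^ (n + 1)) x₀ := by
      funext n
      rw [← Equiv.Perm.mul_apply, ← pow_succ']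
    rw [h4]
    exact htend.comp (Filter.tendsto_add_atTop_nat 1)
  have : d ⟨L, hLI⟩ = ⟨L, hLI⟩ := tendsto_nhds_unique htend2 htend3
  exact absurd this (ne_of_gt (hlt ⟨L, hLI⟩))

private lemma stmt10_le_all {I : Set ℝ} (hIconn : I.OrdConnected) {V : Subgroup (Equiv.Perm I)}
    (hmono : ∀ ψ ∈ V, StrictMono (⇑ψ)) (hfree : ∀ ψ ∈ V, ψ ≠ 1 → ∀ x : I, ψ x ≠ x)
    {a b : Equiv.Perm I} (ha : a ∈ V) (hb : b ∈ V) {x₀ : I} (h : a x₀ ≤ b x₀) :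
    ∀ x : I, a x ≤ b x := by
  have hdmem : a⁻¹ * b ∈ V := mul_mem (inv_mem ha) hb
  rcases stmt10_sign hIconn hmono hfree hdmem with hs | hs | hs
  · exfalso
    have h1 := hs x₀
    rw [Equiv.Perm.mul_apply] at h1
    have h2 := (hmono a ha) h1
    rw [Equiv.Perm.coe_inv, Equiv.apply_symm_apply] at h2
    exact absurd h (not_le.mpr h2)
  · have hab : b = a := by
      have := congrArg (a * ·) hs
      simpa [mul_assoc] using this
    intro x; rw [hab]
  · intro x
    have h1 := hs x
    rw [Equiv.Perm.mul_apply] at h1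
    have h2 := (hmono a ha) h1
    rw [Equiv.Perm.coe_inv, Equiv.apply_symm_apply] at h2
    exact le_of_lt h2

private lemma stmt10_lt_all {I : Set ℝ} (hIconn : I.OrdConnected) {V : Subgroup (Equiv.Perm I)}
    (hmono : ∀ ψ ∈ V, StrictMono (⇑ψ)) (hfree : ∀ ψ ∈ V, ψ ≠ 1 → ∀ x : I, ψ x ≠ x)
    {a b : Equiv.Perm I} (ha : a ∈ V) (hb : b ∈ V) {x₀ : I} (h : a x₀ < b x₀) :
    ∀ x : I, a x < b x := by
  intro x
  have hle := stmt10_le_all hIconn hmono hfree ha hb (le_of_lt h) x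
  rcases lt_or_eq_of_le hle with h1 | h1
  · exact h1
  · exfalso
    have hne : a⁻¹ * b ≠ 1 := by
      intro hcon
      have hab : a = b := by
        have := congrArg (a * ·) hcon
        simpa [mul_assoc] using this.symm
      rw [← hab] at h; exact lt_irrefl _ h
    have := hfree _ (mul_mem (inv_mem ha) hb) hne x
    rw [Equiv.Perm.mul_apply] at this
    apply this
    rw [← h1, Equiv.Perm.coe_inv, Equiv.symm_apply_apply]

private lemma stmt10_window {I : Set ℝ} (hIconn : I.OrdConnected) {V : Subgroup (Equiv.Perm I)}
    (hmono : ∀ ψ ∈ V, StrictMono (⇑ψ)) (hfree : ∀ ψ ∈ V, ψ ≠ 1 → ∀ x : I, ψ x ≠ x)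
    {ε g : Equiv.Perm I} (hε : ε ∈ V) (hg : g ∈ V)
    (hεpos : ∀ x : I, x < ε x) (hgpos : ∀ x : I, x ≤ g x) (p₀ : I) :
    ∃ m : ℕ, (∀ x : I, (ε ^ m) x ≤ g x) ∧ (∀ x : I, g x < (ε ^ (m + 1)) x) := by
  classical
  obtain ⟨K, hK⟩ := stmt10_escape hIconn hmono hfree hε hεpos p₀ (g p₀)
  set P : ℕ → Prop := fun k => (ε ^ k) p₀ ≤ g p₀ with hP
  have hP0 : P 0 := by simpa [P] using hgpos p₀
  set M := Nat.findGreatest P K with hM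
  have hPM : P M := Nat.findGreatest_spec (Nat.zero_le K) hP0
  have hMK : M < K := by
    refine lt_of_le_of_ne (Nat.findGreatest_le K) fun he => ?_
    rw [he] at hPM
    exact absurd hPM (not_le.mpr hK)
  have hnot : ¬ P (M + 1) := Nat.findGreatest_is_greatest (Nat.lt_succ_self M) hMK
  refine ⟨M, ?_, ?_⟩
  · exact stmt10_le_all hIconn hmono hfree (pow_mem hε M) hg hPM
  · exact stmt10_lt_all hIconn hmono hfree hg (pow_mem hε (M + 1)) (not_le.mp hnot)

private lemma stmt10_comm {I : Set ℝ} (hIconn : I.OrdConnected) (hIne : I.Nonempty)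
    {V : Subgroup (Equiv.Perm I)}
    (hmono : ∀ ψ ∈ V, StrictMono (⇑ψ)) (hfree : ∀ ψ ∈ V, ψ ≠ 1 → ∀ x : I, ψ x ≠ x) :
    ∀ a ∈ V, ∀ b ∈ V, a * b = b * a := by
  obtain ⟨x₀r, hx₀⟩ := hIne
  set p₀ : I := ⟨x₀r, hx₀⟩ with hp₀
  -- sign dichotomy up to inverse
  have hsgn : ∀ c ∈ V, (∀ x : I, x ≤ c x) ∨ (∀ x : I, x ≤ c⁻¹ x) := by
    intro c hc
    rcases le_total p₀ (c p₀) with h | h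
    · left
      have := stmt10_le_all hIconn hmono hfree (one_mem V) hc (x₀ := p₀) (by simpa using h)
      intro x; simpa using this x
    · right
      have h2 : p₀ ≤ c⁻¹ p₀ := by
        have := (hmono c⁻¹ (inv_mem hc)).monotone h
        rwa [Equiv.Perm.coe_inv, Equiv.symm_apply_apply] at this
      have := stmt10_le_all hIconn hmono hfree (one_mem V) (inv_mem hc) (x₀ := p₀)
        (by simpa using h2)
      intro x; simpa using this x
  have key : ∀ g ∈ V, ∀ h ∈ V, (∀ x : I, x ≤ g x) → (∀ x : I, x ≤ h x) → g * h = h * g := by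
    intro g hgV h hhV hgpos hhpos
    by_cases hmin : ∃ a ∈ V, (∀ x : I, x < a x) ∧ ∀ b ∈ V, (∀ x : I, x < b x) → ∀ x, a x ≤ b x
    · -- cyclic case
      obtain ⟨a, haV, hapos, hamin⟩ := hmin
      have hrep : ∀ g' ∈ V, (∀ x : I, x ≤ g' x) → ∃ n : ℕ, g' = a ^ n := by
        intro g' hg'V hg'pos
        obtain ⟨M, hM1, hM2⟩ := stmt10_window hIconn hmono hfree haV hg'V hapos hg'pos p₀
        refine ⟨M, ?_⟩
        set r := (a ^ M)⁻¹ * g' with hr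
        have hrV : r ∈ V := mul_mem (inv_mem (pow_mem haV M)) hg'V
        have hrpos : ∀ x : I, x ≤ r x := by
          intro x
          have h1 := (hmono _ (inv_mem (pow_mem haV M))).monotone (hM1 x)
          rwa [Equiv.Perm.coe_inv, Equiv.symm_apply_apply] at h1
        have hrlt : ∀ x : I, r x < a x := by
          intro x
          have h1 := (hmono _ (inv_mem (pow_mem haV M))) (hM2 x)
          have h2 : (a ^ M)⁻¹ ((a ^ (M + 1)) x) = a x := by
            rw [← Equiv.Perm.mul_apply]
            congr 1
            group
          rwa [h2] at h1
        have hr1 : r = 1 := by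
          by_contra hne
          rcases stmt10_sign hIconn hmono hfree hrV with hs | hs | hs
          · exact absurd (hrpos p₀) (not_le.mpr (hs p₀))
          · exact hne hs
          · exact absurd (hrlt p₀) (not_lt.mpr (hamin r hrV hs p₀))
        have : (a ^ M) * r = a ^ M * 1 := by rw [hr1]
        rw [hr, ← mul_assoc, mul_inv_cancel, one_mul, mul_one] at this
        exact this
      have hrepZ : ∀ g' ∈ V, ∃ n : ℤ, g' = a ^ n := by
        intro g' hg'V
        rcases hsgn g' hg'V with hp | hp
        · obtain ⟨n, hn⟩ := hrep g' hg'V hp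
          exact ⟨(n : ℤ), by rw [hn, zpow_natCast]⟩
        · obtain ⟨n, hn⟩ := hrep g'⁻¹ (inv_mem hg'V) hp
          refine ⟨-(n : ℤ), ?_⟩
          rw [zpow_neg, zpow_natCast, ← hn, inv_inv]
      obtain ⟨i, hi⟩ := hrepZ g hgV
      obtain ⟨j, hj⟩ := hrepZ h hhV
      rw [hi, hj, ← zpow_add, ← zpow_add, add_comm]
    · push_neg at hmin
      have hdense : ∀ a ∈ V, (∀ x : I, x < a x) → ∃ b ∈ V, (∀ x : I, x < b x) ∧ ∀ x, b x < a x := by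
        intro a haV hapos
        obtain ⟨b, hbV, hbpos, x, hx⟩ := hmin a haV hapos
        exact ⟨b, hbV, hbpos, stmt10_lt_all hIconn hmono hfree hbV haV hx⟩
      -- main bound
      have hbound : ∀ ε ∈ V, (∀ x : I, x < ε x) →
          (∀ x : I, ((h * g) * (g * h)⁻¹) x ≤ (ε * ε) x) ∧
          (∀ x : I, ((g * h) * (h * g)⁻¹) x ≤ (ε * ε) x) := by
        intro ε hεV hεpos
        obtain ⟨m, hg1, hg2⟩ := stmt10_window hIconn hmono hfree hεV hgV hεpos hgpos p₀
        obtain ⟨n, hh1, hh2⟩ := stmt10_window hIconn hmono hfree hεV hhV hεpos hhpos p₀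
        have prodw : ∀ (A B : Equiv.Perm I) (kA kB : ℕ), A ∈ V → B ∈ V →
            (∀ x : I, (ε ^ kA) x ≤ A x) → (∀ x : I, A x < (ε ^ (kA + 1)) x) →
            (∀ x : I, (ε ^ kB) x ≤ B x) → (∀ x : I, B x < (ε ^ (kB + 1)) x) →
            (∀ x : I, (ε ^ (kA + kB)) x ≤ (A * B) x) ∧
            (∀ x : I, (A * B) x ≤ (ε ^ (kA + kB + 2)) x) := by
          intro A B kA kB hAV hBV hA1 hA2 hB1 hB2
          constructor
          · intro x
            have h1 : (ε ^ kA) ((ε ^ kB) x) ≤ A ((ε ^ kB) x) := hA1 _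
            have h2 : A ((ε ^ kB) x) ≤ A (B x) := (hmono A hAV).monotone (hB1 x)
            calc (ε ^ (kA + kB)) x = (ε ^ kA) ((ε ^ kB) x) := by
                  rw [← Equiv.Perm.mul_apply, ← pow_add]
              _ ≤ A (B x) := le_trans h1 h2
              _ = (A * B) x := (Equiv.Perm.mul_apply _ _ _).symm
          · intro x
            have h1 : A (B x) ≤ A ((ε ^ (kB + 1)) x) := (hmono A hAV).monotone (le_of_lt (hB2 x))
            have h2 : A ((ε ^ (kB + 1)) x) ≤ (ε ^ (kA + 1)) ((ε ^ (kB + 1)) x) :=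
              le_of_lt (hA2 _)
            calc (A * B) x = A (B x) := Equiv.Perm.mul_apply _ _ _
              _ ≤ (ε ^ (kA + 1)) ((ε ^ (kB + 1)) x) := le_trans h1 h2
              _ = (ε ^ (kA + kB + 2)) x := by
                  rw [← Equiv.Perm.mul_apply, ← pow_add]
                  congr 2
                  omega
        obtain ⟨hgh1, hgh2⟩ := prodw g h m n hgV hhV hg1 hg2 hh1 hh2
        obtain ⟨hhg1, hhg2⟩ := prodw h g n m hhV hgV hh1 hh2 hg1 hg2
        have sq : ∀ (C D : Equiv.Perm I), C ∈ V → D ∈ V →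
            (∀ x : I, (ε ^ (m + n)) x ≤ C x) → (∀ x : I, D x ≤ (ε ^ (m + n + 2)) x) →
            ∀ x : I, (D * C⁻¹) x ≤ (ε * ε) x := by
          intro C D hCV hDV hC1 hD2 x
          set y := C⁻¹ x with hy
          have h1 : (D * C⁻¹) x = D y := Equiv.Perm.mul_apply _ _ _
          have h2 : D y ≤ (ε ^ (m + n + 2)) y := hD2 y
          have hpe : ε ^ (m + n + 2) = (ε * ε) * ε ^ (m + n) := by
            rw [show m + n + 2 = 1 + 1 + (m + n) by omega, pow_add, pow_add, pow_one]
          have h3 : (ε ^ (m + n + 2)) y = (ε * ε) ((ε ^ (m + n)) y) := by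
            rw [hpe, Equiv.Perm.mul_apply]
          have h4 : (ε ^ (m + n)) y ≤ x := by
            have := hC1 y
            rwa [hy, Equiv.Perm.coe_inv, Equiv.apply_symm_apply] at this
          have h5 : (ε * ε) ((ε ^ (m + n)) y) ≤ (ε * ε) x :=
            (hmono _ (mul_mem hεV hεV)).monotone h4
          rw [h1]
          calc D y ≤ (ε ^ (m + n + 2)) y := h2
            _ = (ε * ε) ((ε ^ (m + n)) y) := h3
            _ ≤ (ε * ε) x := h5
        constructor
        · exact sq (g * h) (h * g) (mul_mem hgV hhV) (mul_mem hhV hgV) hgh1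
            (fun x => by have := hhg2 x; rwa [show n + m = m + n by omega] at this)
        · exact sq (h * g) (g * h) (mul_mem hhV hgV) (mul_mem hgV hhV)
            (fun x => by have := hhg1 x; rwa [show n + m = m + n by omega] at this) hgh2
      -- contradiction machine
      have contra : ∀ v ∈ V, (∀ x : I, x < v x) →
          (∀ ε ∈ V, (∀ x : I, x < ε x) → ∀ x : I, v x ≤ (ε * ε) x) → False := by
        intro v hvV hvpos hvb
        obtain ⟨w, hwV, hwpos, hwlt⟩ := hdense v hvV hvpos
        obtain ⟨δ, hδV, hδpos, hδlt⟩ := hdense w hwV hwpos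
        have hδwV : δ⁻¹ * w ∈ V := mul_mem (inv_mem hδV) hwV
        have hδwpos : ∀ x : I, x < (δ⁻¹ * w) x := by
          intro x
          rw [Equiv.Perm.mul_apply]
          have := (hmono δ⁻¹ (inv_mem hδV)) (hδlt x)
          rwa [Equiv.Perm.coe_inv, Equiv.symm_apply_apply] at this
        -- ε := pointwise min of δ and δ⁻¹ * w
        have hmain : ∃ ε ∈ V, (∀ x : I, x < ε x) ∧ (∀ x : I, ε x ≤ δ x) ∧
            (∀ x : I, ε x ≤ (δ⁻¹ * w) x) := by
          rcases le_total (δ p₀) ((δ⁻¹ * w) p₀) with hc | hc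
          · exact ⟨δ, hδV, hδpos, fun x => le_refl _,
              stmt10_le_all hIconn hmono hfree hδV hδwV hc⟩
          · exact ⟨δ⁻¹ * w, hδwV, hδwpos,
              stmt10_le_all hIconn hmono hfree hδwV hδV hc, fun x => le_refl _⟩
        obtain ⟨ε, hεV, hεpos, hεδ, hεw⟩ := hmain
        have hεε : ∀ x : I, (ε * ε) x ≤ w x := by
          intro x
          have h1 : ε (ε x) ≤ ε ((δ⁻¹ * w) x) := (hmono ε hεV).monotone (hεw x)
          have h2 : ε ((δ⁻¹ * w) x) ≤ δ ((δ⁻¹ * w) x) := hεδ _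
          have h3 : δ ((δ⁻¹ * w) x) = w x := by
            rw [Equiv.Perm.mul_apply, Equiv.Perm.coe_inv, Equiv.apply_symm_apply]
          rw [Equiv.Perm.mul_apply]
          calc ε (ε x) ≤ δ ((δ⁻¹ * w) x) := le_trans h1 h2
            _ = w x := h3
        have h1 : v p₀ ≤ (ε * ε) p₀ := hvb ε hεV hεpos p₀
        have h2 : (ε * ε) p₀ ≤ w p₀ := hεε p₀
        exact absurd (lt_of_le_of_lt (le_trans h1 h2) (hwlt p₀)) (lt_irrefl _)
      set u := (h * g) * (g * h)⁻¹ with hu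
      have huV : u ∈ V := mul_mem (mul_mem hhV hgV) (inv_mem (mul_mem hgV hhV))
      have hu1 : u = 1 := by
        by_contra hne
        rcases stmt10_sign hIconn hmono hfree huV with hs | hs | hs
        · -- u < 1, use u⁻¹
          have huinv : u⁻¹ = (g * h) * (h * g)⁻¹ := by
            rw [hu]; group
          have huinvpos : ∀ x : I, x < u⁻¹ x := by
            intro x
            have := hs (u⁻¹ x)
            rwa [Equiv.Perm.coe_inv, Equiv.apply_symm_apply] at this
          refine contra u⁻¹ (inv_mem huV) huinvpos ?_
          intro ε hεV hεpos x
          rw [huinv]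
          exact (hbound ε hεV hεpos).2 x
        · exact hne hs
        · refine contra u huV hs ?_
          intro ε hεV hεpos x
          exact (hbound ε hεV hεpos).1 x
      have h2 : (h * g) * (g * h)⁻¹ * (g * h) = 1 * (g * h) := by rw [← hu, hu1]
      rw [inv_mul_cancel_right, one_mul] at h2
      exact h2.symm
  -- general case from positive case
  intro a haV b hbV
  have comm_of : ∀ (x y : Equiv.Perm I), x * y = y * x → Commute x y := fun x y hc => hc
  rcases hsgn a haV with hA | hA <;> rcases hsgn b hbV with hB | hB
  · exact key a haV b hbV hA hB
  · have hc : Commute a b⁻¹ := comm_of _ _ (key a haV b⁻¹ (inv_mem hbV) hA hB)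
    exact (Commute.inv_right_iff.mp hc).eq
  · have hc : Commute a⁻¹ b := comm_of _ _ (key a⁻¹ (inv_mem haV) b hbV hA hB)
    exact (Commute.inv_left_iff.mp hc).eq
  · have hc : Commute a⁻¹ b⁻¹ := comm_of _ _ (key a⁻¹ (inv_mem haV) b⁻¹ (inv_mem hbV) hA hB)
    exact (Commute.inv_left_iff.mp (Commute.inv_right_iff.mp hc)).eq

/-- If `I` is an open interval of reals (open, order-connected, nonempty subset of `ℝ`),
`V ≤ Homeo⁺(I)` acts freely on `I` (modelled as a subgroup of `Equiv.Perm I` of strictly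
monotone permutations with no non-identity element having a fixed point), `S` is a nonempty
set, and `F : I → S` is invariant with respect to some non-identity member of `V`, then for
any `φ ∈ V`: if `F` is past `φ`-invariant (`φ`-invariant before some `t ∈ I`), then `F` is
fully `φ`-invariant. -/
theorem stmt_10 (I : Set ℝ) (hIopen : IsOpen I) (hIconn : I.OrdConnected) (hIne : I.Nonempty)
    (V : Subgroup (Equiv.Perm I))
    (hmono : ∀ ψ ∈ V, StrictMono (⇑ψ))
    (hfree : ∀ ψ ∈ V, ψ ≠ 1 → ∀ x : I, ψ x ≠ x)
    (S : Type*) [Nonempty S] (F : I → S)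
    (hinvsome : ∃ ψ ∈ V, ψ ≠ 1 ∧ ∀ x : I, F (ψ x) = F x)
    (φ : Equiv.Perm I) (hφ : φ ∈ V)
    (hpast : ∃ t : I, ∀ x : I, x < t → F (φ x) = F x) :
    ∀ x : I, F (φ x) = F x := by
  obtain ⟨ψ, hψV, hψne, hψinv⟩ := hinvsome
  obtain ⟨t, ht⟩ := hpast
  -- get χ ∈ V with χ < id pointwise and F ∘ χ = F
  have hχ : ∃ χ ∈ V, (∀ x : I, χ x < x) ∧ ∀ x : I, F (χ x) = F x := by
    rcases stmt10_sign hIconn hmono hfree hψV with hs | hs | hs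
    · exact ⟨ψ, hψV, hs, hψinv⟩
    · exact absurd hs hψne
    · refine ⟨ψ⁻¹, inv_mem hψV, fun x => ?_, fun x => ?_⟩
      · have := (hmono ψ⁻¹ (inv_mem hψV)) (hs x)
        rwa [Equiv.Perm.coe_inv, Equiv.symm_apply_apply] at this
      · conv_rhs => rw [← Equiv.apply_symm_apply ψ x]
        exact (hψinv (ψ⁻¹ x)).symm
  obtain ⟨χ, hχV, hχneg, hχinv⟩ := hχ
  -- iterated invariance
  have hFn : ∀ (n : ℕ) (x : I), F ((χ ^ n) x) = F x := by
    intro n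
    induction n with
    | zero => intro x; simp
    | succ n ih =>
      intro x
      have h1 : (χ ^ (n + 1)) x = (χ ^ n) (χ x) := by
        rw [← Equiv.Perm.mul_apply, ← pow_succ]
      rw [h1, ih (χ x), hχinv x]
  intro x
  -- find n with (χ ^ n) x < t
  have hχinvpos : ∀ y : I, y < χ⁻¹ y := by
    intro y
    have := hχneg (χ⁻¹ y)
    rwa [Equiv.Perm.coe_inv, Equiv.apply_symm_apply] at this
  obtain ⟨n, hn⟩ := stmt10_escape hIconn hmono hfree (inv_mem hχV) hχinvpos t x
  have hlt : (χ ^ n) x < t := by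
    have h1 := (hmono _ (pow_mem hχV n)) hn
    have h2 : (χ ^ n) ((χ⁻¹ ^ n) t) = t := by
      rw [← Equiv.Perm.mul_apply, inv_pow, mul_inv_cancel, Equiv.Perm.one_apply]
    rwa [h2] at h1
  have hcomm : φ * χ ^ n = χ ^ n * φ :=
    stmt10_comm hIconn hIne hmono hfree φ hφ (χ ^ n) (pow_mem hχV n)
  calc F (φ x) = F ((χ ^ n) (φ x)) := (hFn n (φ x)).symm
    _ = F ((χ ^ n * φ) x) := by rw [Equiv.Perm.mul_apply]
    _ = F ((φ * χ ^ n) x) := by rw [hcomm]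
    _ = F (φ ((χ ^ n) x)) := by rw [Equiv.Perm.mul_apply]
    _ = F ((χ ^ n) x) := ht _ hlt
    _ = F x := hFn n x
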